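/- Let q be a prime power and let V ≤ GL_4(F_q) be the group of upper unitriangular 4 × 4 matrices u over F_q with u_{23} = 0 (this is the unipotent radical of the stabilizer in GL_4(F_q) of the flag 0 ⊆ F_q^1 ⊆ F_q^3 ⊆ F_q^4 of coordinate subspaces). Then the number of conjugacy classes of V equals (q−1)^4 + 4(q−1)^3 + 6(q−1)^2 + 5(q−1) + 1. -/

import Mathlib

open Matrix

/-- The coordinate subspace of `K^n` spanned by the first `m` standard basis vectors. -/
def coordSub (K : Type*) [Field K] (n m : ℕ) : Submodule K (Fin n → K) where
  carrier := {v | ∀ j : Fin n, m ≤ (j : ℕ) → v j = 0}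
  add_mem' := by intro a b ha hb j hj; simp [ha j hj, hb j hj]
  zero_mem' := by intro j hj; rfl
  smul_mem' := by intro c v hv j hj; simp [hv j hj]

lemma coordSub_mono (K : Type*) [Field K] (n : ℕ) {m m' : ℕ} (h : m ≤ m') :
    coordSub K n m ≤ coordSub K n m' := fun v hv j hj => hv j (le_trans h hj)

lemma coordSub_zero (K : Type*) [Field K] (n : ℕ) {v : Fin n → K}
    (hv : v ∈ coordSub K n 0) : v = 0 := funext fun j => hv j (Nat.zero_le _)

/-- The parabolic subgroup of `GL n K` stabilizing the flag of coordinate subspaces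
of dimensions `d 1 ≤ d 2 ≤ ... ≤ d t`. -/
def flagP (K : Type*) [Field K] (n t : ℕ) (d : ℕ → ℕ) : Subgroup (GL (Fin n) K) where
  carrier := {g | ∀ i, 1 ≤ i → i ≤ t →
    Submodule.map (Matrix.mulVecLin (g : Matrix (Fin n) (Fin n) K)) (coordSub K n (d i))
      = coordSub K n (d i)}
  one_mem' := by
    intro i h1 h2
    simp
  mul_mem' := by
    intro a b ha hb i h1 h2
    have hab : ((↑(a * b) : Matrix (Fin n) (Fin n) K))
        = (↑a : Matrix (Fin n) (Fin n) K) * (↑b : Matrix (Fin n) (Fin n) K) := rfl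
    rw [Set.mem_setOf_eq] at *
    rw [hab, Matrix.mulVecLin_mul, Submodule.map_comp, hb i h1 h2, ha i h1 h2]
  inv_mem' := by
    intro a ha i h1 h2
    rw [Set.mem_setOf_eq] at *
    conv_lhs => rw [← ha i h1 h2]
    rw [← Submodule.map_comp, ← Matrix.mulVecLin_mul, Units.inv_mul, Matrix.mulVecLin_one,
      Submodule.map_id]

section flagU

variable {K : Type*} [Field K] {n t : ℕ} {d : ℕ → ℕ}

private lemma flagU_carrier_stab (h0 : d 0 = 0) (hd : Monotone d) {a : GL (Fin n) K}
    (ha : ∀ i, 1 ≤ i → i ≤ t → ∀ v ∈ coordSub K n (d i),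
      ((a : Matrix (Fin n) (Fin n) K) - 1).mulVec v ∈ coordSub K n (d (i - 1)))
    {i : ℕ} (hi : i ≤ t) {w : Fin n → K} (hw : w ∈ coordSub K n (d i)) :
    (a : Matrix (Fin n) (Fin n) K).mulVec w ∈ coordSub K n (d i) := by
  rcases Nat.eq_zero_or_pos i with h | h
  · subst h
    rw [h0] at hw
    rw [coordSub_zero K n hw, Matrix.mulVec_zero]
    exact Submodule.zero_mem _
  · have key : (a : Matrix (Fin n) (Fin n) K).mulVec w
        = ((a : Matrix (Fin n) (Fin n) K) - 1).mulVec w + w := by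
      rw [Matrix.sub_mulVec, Matrix.one_mulVec, sub_add_cancel]
    rw [key]
    exact Submodule.add_mem _
      (coordSub_mono K n (hd (Nat.sub_le i 1)) (ha i h hi w hw)) hw

private lemma flagU_carrier_inv_stab (h0 : d 0 = 0) (hd : Monotone d) {a : GL (Fin n) K}
    (ha : ∀ i, 1 ≤ i → i ≤ t → ∀ v ∈ coordSub K n (d i),
      ((a : Matrix (Fin n) (Fin n) K) - 1).mulVec v ∈ coordSub K n (d (i - 1)))
    {i : ℕ} (hi : i ≤ t) {w : Fin n → K} (hw : w ∈ coordSub K n (d i)) :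
    ((a⁻¹ : GL (Fin n) K) : Matrix (Fin n) (Fin n) K).mulVec w ∈ coordSub K n (d i) := by
  set f := Matrix.mulVecLin (a : Matrix (Fin n) (Fin n) K) with hf
  have hinj : Function.Injective f := by
    have : Function.LeftInverse
        (Matrix.mulVecLin ((a⁻¹ : GL (Fin n) K) : Matrix (Fin n) (Fin n) K)) f := by
      intro v
      simp only [hf, Matrix.mulVecLin_apply, Matrix.mulVec_mulVec, Units.inv_mul,
        Matrix.one_mulVec]
    exact this.injective
  have hle : Submodule.map f (coordSub K n (d i)) ≤ coordSub K n (d i) := by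
    rintro y ⟨v, hv, rfl⟩
    exact flagU_carrier_stab h0 hd ha hi hv
  have heq : Submodule.map f (coordSub K n (d i)) = coordSub K n (d i) := by
    apply Submodule.eq_of_le_of_finrank_le hle
    rw [LinearEquiv.finrank_eq (Submodule.equivMapOfInjective f hinj (coordSub K n (d i)))]
  rw [← heq] at hw
  rcases hw with ⟨v, hv, rfl⟩
  have : ((a⁻¹ : GL (Fin n) K) : Matrix (Fin n) (Fin n) K).mulVec (f v) = v := by
    simp only [hf, Matrix.mulVecLin_apply, Matrix.mulVec_mulVec, Units.inv_mul,
      Matrix.one_mulVec]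
  rwa [this]

/-- The unipotent radical of the parabolic subgroup of `GL n K` stabilizing the flag of
coordinate subspaces of dimensions `d 1 ≤ ... ≤ d t`: all `u` with
`(u - 1) V i ⊆ V (i-1)` for each `i`. -/
def flagU (K : Type*) [Field K] (n t : ℕ) (d : ℕ → ℕ) (h0 : d 0 = 0) (hd : Monotone d) :
    Subgroup (GL (Fin n) K) where
  carrier := {g | ∀ i, 1 ≤ i → i ≤ t → ∀ v ∈ coordSub K n (d i),
    ((g : Matrix (Fin n) (Fin n) K) - 1).mulVec v ∈ coordSub K n (d (i - 1))}
  one_mem' := by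
    intro i h1 h2 v hv
    simp only [Units.val_one, sub_self, Matrix.zero_mulVec]
    exact Submodule.zero_mem _
  mul_mem' := by
    intro a b ha hb i h1 h2 v hv
    rw [Set.mem_setOf_eq] at ha hb
    have hab : ((↑(a * b) : Matrix (Fin n) (Fin n) K))
        = (↑a : Matrix (Fin n) (Fin n) K) * (↑b : Matrix (Fin n) (Fin n) K) := rfl
    have key : ((↑(a * b) : Matrix (Fin n) (Fin n) K) - 1).mulVec v
        = (↑a : Matrix (Fin n) (Fin n) K).mulVec
            (((↑b : Matrix (Fin n) (Fin n) K) - 1).mulVec v)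
          + ((↑a : Matrix (Fin n) (Fin n) K) - 1).mulVec v := by
      rw [hab, Matrix.mulVec_mulVec, ← Matrix.add_mulVec]
      congr 1
      noncomm_ring
    rw [key]
    refine Submodule.add_mem _ ?_ (ha i h1 h2 v hv)
    exact flagU_carrier_stab h0 hd ha (le_trans (Nat.sub_le i 1) h2) (hb i h1 h2 v hv)
  inv_mem' := by
    intro a ha i h1 h2 v hv
    rw [Set.mem_setOf_eq] at ha
    have hmul : ((a⁻¹ : GL (Fin n) K) : Matrix (Fin n) (Fin n) K)
        * ((a : Matrix (Fin n) (Fin n) K) - 1)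
        = 1 - ((a⁻¹ : GL (Fin n) K) : Matrix (Fin n) (Fin n) K) := by
      rw [mul_sub, Units.inv_mul, mul_one]
    have key : (((a⁻¹ : GL (Fin n) K) : Matrix (Fin n) (Fin n) K) - 1).mulVec v
        = -((a⁻¹ : GL (Fin n) K) : Matrix (Fin n) (Fin n) K).mulVec
            (((a : Matrix (Fin n) (Fin n) K) - 1).mulVec v) := by
      rw [Matrix.mulVec_mulVec, hmul, Matrix.sub_mulVec, Matrix.sub_mulVec,
        Matrix.one_mulVec, neg_sub]
    rw [key]
    exact Submodule.neg_mem _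
      (flagU_carrier_inv_stab h0 hd ha (le_trans (Nat.sub_le i 1) h2) (ha i h1 h2 v hv))

end flagU

section matCent

variable {K : Type*} [Field K] {n : ℕ}

private lemma matCent_key (x : Matrix (Fin n) (Fin n) K) (g : GL (Fin n) K) :
    (↑g : Matrix (Fin n) (Fin n) K) * x * (↑g⁻¹ : Matrix (Fin n) (Fin n) K) = x
      ↔ (↑g : Matrix (Fin n) (Fin n) K) * x = x * (↑g : Matrix (Fin n) (Fin n) K) := by
  constructor
  · intro h
    have h2 : (↑g : Matrix (Fin n) (Fin n) K) * x * (↑g⁻¹ : Matrix (Fin n) (Fin n) K)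
        * (↑g : Matrix (Fin n) (Fin n) K) = x * (↑g : Matrix (Fin n) (Fin n) K) := by rw [h]
    rwa [mul_assoc ((↑g : Matrix (Fin n) (Fin n) K) * x), Units.inv_mul, mul_one] at h2
  · intro h
    rw [h, mul_assoc, Units.mul_inv, mul_one]

/-- The centralizer in `GL n K` of a matrix `x`: all `g` with `g * x * g⁻¹ = x`. -/
def matCent (K : Type*) [Field K] (n : ℕ) (x : Matrix (Fin n) (Fin n) K) :
    Subgroup (GL (Fin n) K) where
  carrier := {g | (↑g : Matrix (Fin n) (Fin n) K) * x * (↑g⁻¹ : Matrix (Fin n) (Fin n) K) = x}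
  one_mem' := by
    simp
  mul_mem' := by
    intro a b ha hb
    simp only [Set.mem_setOf_eq, matCent_key] at ha hb ⊢
    have hab : ((↑(a * b) : Matrix (Fin n) (Fin n) K))
        = (↑a : Matrix (Fin n) (Fin n) K) * (↑b : Matrix (Fin n) (Fin n) K) := rfl
    rw [hab, mul_assoc, hb, ← mul_assoc, ha, mul_assoc]
  inv_mem' := by
    intro a ha
    simp only [Set.mem_setOf_eq, matCent_key] at ha ⊢
    calc (↑a⁻¹ : Matrix (Fin n) (Fin n) K) * x
        = ↑a⁻¹ * x * ((↑a : Matrix (Fin n) (Fin n) K) * ↑a⁻¹) := by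
          rw [Units.mul_inv, mul_one]
      _ = ↑a⁻¹ * (x * (↑a : Matrix (Fin n) (Fin n) K)) * ↑a⁻¹ := by
          simp only [mul_assoc]
      _ = ↑a⁻¹ * ((↑a : Matrix (Fin n) (Fin n) K) * x) * ↑a⁻¹ := by rw [← ha]
      _ = x * ↑a⁻¹ := by rw [← mul_assoc, Units.inv_mul, one_mul]

end matCent

/-- The Lie algebra of the unipotent radical: matrices mapping each flag subspace `V i`
into `V (i-1)`. -/
def uSet (K : Type*) [Field K] (n t : ℕ) (d : ℕ → ℕ) : Set (Matrix (Fin n) (Fin n) K) :=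
  {x | ∀ i, 1 ≤ i → i ≤ t → ∀ v ∈ coordSub K n (d i), x.mulVec v ∈ coordSub K n (d (i - 1))}

/-- A group is split unipotent over the field `K` if it has a finite normal series each of
whose successive quotients is isomorphic to the additive group `(K, +)`. -/
def IsSplitUnipotentOver (K : Type*) [Field K] (G : Type*) [Group G] : Prop :=
  ∃ (k : ℕ) (s : Fin (k + 1) → Subgroup G), s 0 = ⊥ ∧ s (Fin.last k) = ⊤ ∧
    ∀ i : Fin k, s i.castSucc ≤ s i.succ ∧
      ∃ _ : ((s i.castSucc).subgroupOf (s i.succ)).Normal,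
        Nonempty ((↥(s i.succ) ⧸ (s i.castSucc).subgroupOf (s i.succ)) ≃* Multiplicative K)

/-- The dimension sequence `0, 2, 3, 4` of the flag `0 ⊆ F^2 ⊆ F^3 ⊆ F^4`. -/
def dU234 : ℕ → ℕ := fun i => min (min (i + 1) (2 * i)) 4

lemma dU234_zero : dU234 0 = 0 := rfl

lemma dU234_mono : Monotone dU234 := by
  intro a b h
  simp only [dU234]
  omega

/-- The dimension sequence `0, 1, 3, 4` of the flag `0 ⊆ F^1 ⊆ F^3 ⊆ F^4`. -/
def dV134 : ℕ → ℕ := fun i => min (2 * i - 1) 4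

lemma dV134_zero : dV134 0 = 0 := rfl

lemma dV134_mono : Monotone dV134 := by
  intro a b h
  simp only [dV134]
  omega

universe u

/-! ### Auxiliary material for `stmt12` -/

section HeisGroup

variable (K : Type u) [Field K]

/-- Explicit model for the unipotent radical of the flag `0 ⊆ K¹ ⊆ K³ ⊆ K⁴`. -/
structure Heis where
  a : K
  b : K
  d : K
  e : K
  c : K

namespace Heis
variable {K}

instance : Mul (Heis K) :=
  ⟨fun x y => ⟨x.a + y.a, x.b + y.b, x.d + y.d, x.e + y.e, x.c + y.c + x.a * y.d + x.b * y.e⟩⟩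

instance : One (Heis K) := ⟨⟨0, 0, 0, 0, 0⟩⟩

instance : Inv (Heis K) := ⟨fun x => ⟨-x.a, -x.b, -x.d, -x.e, -x.c + x.a * x.d + x.b * x.e⟩⟩

lemma mul_def (x y : Heis K) : x * y =
    ⟨x.a + y.a, x.b + y.b, x.d + y.d, x.e + y.e, x.c + y.c + x.a * y.d + x.b * y.e⟩ := rfl

lemma inv_def (x : Heis K) :
    x⁻¹ = ⟨-x.a, -x.b, -x.d, -x.e, -x.c + x.a * x.d + x.b * x.e⟩ := rfl

lemma one_def : (1 : Heis K) = ⟨0, 0, 0, 0, 0⟩ := rfl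

instance : Group (Heis K) where
  mul_assoc x y z := by
    simp only [mul_def, mk.injEq]
    refine ⟨by ring, by ring, by ring, by ring, by ring⟩
  one_mul x := by
    cases x; simp only [one_def, mul_def, mk.injEq]
    refine ⟨by ring, by ring, by ring, by ring, by ring⟩
  mul_one x := by
    cases x; simp only [one_def, mul_def, mk.injEq]
    refine ⟨by ring, by ring, by ring, by ring, by ring⟩
  inv_mul_cancel x := by
    simp only [inv_def, mul_def, one_def, mk.injEq]
    refine ⟨by ring, by ring, by ring, by ring, by ring⟩

lemma conj_eq (g x : Heis K) : g * x * g⁻¹ =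
    ⟨x.a, x.b, x.d, x.e, x.c + (g.a * x.d + g.b * x.e - x.a * g.d - x.b * g.e)⟩ := by
  simp only [mul_def, inv_def, mk.injEq]
  refine ⟨by ring, by ring, by ring, by ring, by ring⟩

lemma isConj_iff' {x y : Heis K} : IsConj x y ↔
    (x.a = y.a ∧ x.b = y.b ∧ x.d = y.d ∧ x.e = y.e ∧
      ((x.a = 0 ∧ x.b = 0 ∧ x.d = 0 ∧ x.e = 0) → x.c = y.c)) := by
  rw [isConj_iff]
  constructor
  · rintro ⟨g, hg⟩
    rw [conj_eq] at hg
    rw [← hg]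
    refine ⟨rfl, rfl, rfl, rfl, ?_⟩
    rintro ⟨h1, h2, h3, h4⟩
    simp [h1, h2, h3, h4]
  · rintro ⟨h1, h2, h3, h4, h5⟩
    by_cases hz : x.a = 0 ∧ x.b = 0 ∧ x.d = 0 ∧ x.e = 0
    · have : x = y := by cases x; cases y; simp_all
      exact ⟨1, by rw [this, conj_eq]; cases y; simp_all⟩
    · have : ∃ g : Heis K, g.a * x.d + g.b * x.e - x.a * g.d - x.b * g.e = y.c - x.c := by
        push_neg at hz
        by_cases ha : x.a = 0
        · by_cases hb : x.b = 0
          · by_cases hd : x.d = 0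
            · have he : x.e ≠ 0 := by tauto
              exact ⟨⟨0, (y.c - x.c) / x.e, 0, 0, 0⟩, by field_simp; ring⟩
            · exact ⟨⟨(y.c - x.c) / x.d, 0, 0, 0, 0⟩, by field_simp; ring⟩
          · refine ⟨⟨0, 0, 0, -((y.c - x.c) / x.b), 0⟩, ?_⟩
            field_simp
            ring
        · refine ⟨⟨0, 0, -((y.c - x.c) / x.a), 0, 0⟩, ?_⟩
          field_simp
          ring
      obtain ⟨g, hg⟩ := this
      refine ⟨g, ?_⟩
      rw [conj_eq, hg]
      cases x; cases y
      simp_all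

end Heis

end HeisGroup

section HeisCount

variable {K : Type u} [Field K] [Fintype K]

set_option linter.unusedSectionVars false

open scoped Classical

noncomputable instance : Fintype (Heis K) :=
  Fintype.ofInjective (fun x : Heis K => (x.a, x.b, x.d, x.e, x.c))
    (by rintro ⟨a, b, d, e, c⟩ ⟨a', b', d', e', c'⟩ h; simpa using h)

/-- Normal form representative of the conjugacy class. -/
noncomputable def Heis.nf (x : Heis K) : Heis K :=
  if (x.a = 0 ∧ x.b = 0 ∧ x.d = 0 ∧ x.e = 0) then x else ⟨x.a, x.b, x.d, x.e, 0⟩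

lemma Heis.isConj_nf (x : Heis K) : IsConj x (Heis.nf x) := by
  rw [Heis.nf]
  split_ifs with h
  · exact IsConj.refl x
  · rw [Heis.isConj_iff']
    exact ⟨rfl, rfl, rfl, rfl, fun hz => absurd hz h⟩

lemma Heis.nf_eq_of_isConj {x y : Heis K} (h : IsConj x y) : Heis.nf x = Heis.nf y := by
  rw [Heis.isConj_iff'] at h
  obtain ⟨h1, h2, h3, h4, h5⟩ := h
  simp only [Heis.nf, h1, h2, h3, h4]
  split_ifs with hz
  · cases x; cases y; simp_all
  · rfl

/-- Representatives of the conjugacy classes. -/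
def HR (K : Type u) [Field K] : Set (Heis K) :=
  {x | (x.a = 0 ∧ x.b = 0 ∧ x.d = 0 ∧ x.e = 0) ∨ x.c = 0}

lemma Heis.nf_mem (x : Heis K) : Heis.nf x ∈ HR K := by
  rw [Heis.nf]; split_ifs with h
  · exact Or.inl h
  · exact Or.inr rfl

noncomputable def heisConjEquiv : ConjClasses (Heis K) ≃ HR K where
  toFun := Quotient.lift (fun x => (⟨Heis.nf x, Heis.nf_mem x⟩ : HR K))
    (fun x y h => Subtype.ext (Heis.nf_eq_of_isConj h))
  invFun r := ConjClasses.mk r.1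
  left_inv := by
    intro z
    induction z using Quotient.inductionOn with
    | h x =>
      show ConjClasses.mk (Heis.nf x) = _
      rw [ConjClasses.quotient_mk_eq_mk, ConjClasses.mk_eq_mk_iff_isConj]
      exact (Heis.isConj_nf x).symm
  right_inv := by
    rintro ⟨x, hx⟩
    apply Subtype.ext
    show Heis.nf x = x
    rw [Heis.nf]
    rcases hx with h | h
    · rw [if_pos h]
    · split_ifs with h'
      · rfl
      · cases x; simp_all

noncomputable def hrEquiv : HR K ≃ K ⊕ {y : K × K × K × K // y ≠ 0} where
  toFun r :=
    if h : ((r : Heis K).a = 0 ∧ (r : Heis K).b = 0 ∧ (r : Heis K).d = 0 ∧ (r : Heis K).e = 0)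
    then Sum.inl (r : Heis K).c
    else Sum.inr ⟨((r : Heis K).a, (r : Heis K).b, (r : Heis K).d, (r : Heis K).e), by
      intro hz
      apply h
      have h1 : (r : Heis K).a = 0 := congrArg Prod.fst hz
      have h2 : (r : Heis K).b = 0 := congrArg (fun p => p.2.1) hz
      have h3 : (r : Heis K).d = 0 := congrArg (fun p => p.2.2.1) hz
      have h4 : (r : Heis K).e = 0 := congrArg (fun p => p.2.2.2) hz
      exact ⟨h1, h2, h3, h4⟩⟩
  invFun s := match s with
    | Sum.inl c => ⟨⟨0, 0, 0, 0, c⟩, Or.inl ⟨rfl, rfl, rfl, rfl⟩⟩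
    | Sum.inr y => ⟨⟨y.1.1, y.1.2.1, y.1.2.2.1, y.1.2.2.2, 0⟩, Or.inr rfl⟩
  left_inv := by
    rintro ⟨x, hx⟩
    dsimp only
    split_ifs with h
    · apply Subtype.ext
      obtain ⟨h1, h2, h3, h4⟩ := h
      cases x; simp_all
    · apply Subtype.ext
      have hc : x.c = 0 := by
        rcases hx with h' | h'
        · exact absurd h' h
        · exact h'
      cases x; simp_all
  right_inv := by
    rintro (c | y)
    · simp
    · dsimp only
      have hne : ¬((y : K × K × K × K).1 = 0 ∧ (y : K × K × K × K).2.1 = 0 ∧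
          (y : K × K × K × K).2.2.1 = 0 ∧ (y : K × K × K × K).2.2.2 = 0) := by
        rintro ⟨h1, h2, h3, h4⟩
        exact y.2 (by simp_all [Prod.ext_iff])
      rw [dif_neg hne]

lemma card_conjClasses_heis :
    Nat.card (ConjClasses (Heis K)) = Fintype.card K ^ 4 + Fintype.card K - 1 := by
  rw [Nat.card_congr ((heisConjEquiv (K := K)).trans hrEquiv), Nat.card_sum]
  have h4 : Nat.card {y : K × K × K × K // y ≠ 0} = Fintype.card K ^ 4 - 1 := by
    rw [Nat.card_eq_fintype_card, Fintype.card_subtype_compl, Fintype.card_subtype_eq]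
    simp [Fintype.card_prod]
    ring_nf
  rw [h4, Nat.card_eq_fintype_card]
  have h1 : 1 ≤ Fintype.card K := Fintype.card_pos
  have : 1 ≤ Fintype.card K ^ 4 := Nat.one_le_pow _ _ Fintype.card_pos
  omega

end HeisCount

/-- Conjugacy classes are preserved by group isomorphisms. -/
def conjClassesCongr {G H : Type*} [Group G] [Group H] (e : G ≃* H) :
    ConjClasses G ≃ ConjClasses H :=
  Quotient.congr e.toEquiv (by
    intro a b
    change IsConj a b ↔ IsConj (e a) (e b)
    constructor
    · intro h
      exact e.toMonoidHom.map_isConj h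
    · intro h
      have := e.symm.toMonoidHom.map_isConj h
      simpa using this)

section MatrixSide

variable {K : Type u} [Field K]

lemma mem_coordSub {n m : ℕ} {v : Fin n → K} :
    v ∈ coordSub K n m ↔ ∀ j : Fin n, m ≤ (j : ℕ) → v j = 0 := Iff.rfl

lemma single_mem_coordSub {n m : ℕ} (j : Fin n) (hj : (j : ℕ) < m) (x : K) :
    Pi.single j x ∈ coordSub K n m := by
  rw [mem_coordSub]
  intro j' hj'
  have hne : j' ≠ j := by
    rintro rfl; omega
  classical
  rw [Pi.single_apply, if_neg hne]

lemma mem_flagU_iff (g : GL (Fin 4) K) :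
    g ∈ flagU K 4 3 dV134 dV134_zero dV134_mono ↔
      ((∀ i j : Fin 4, j < i → (↑g : Matrix (Fin 4) (Fin 4) K) i j = 0) ∧
       (∀ i : Fin 4, (↑g : Matrix (Fin 4) (Fin 4) K) i i = 1) ∧
       (↑g : Matrix (Fin 4) (Fin 4) K) 1 2 = 0) := by
  have hmem : g ∈ flagU K 4 3 dV134 dV134_zero dV134_mono ↔
      ∀ i, 1 ≤ i → i ≤ 3 → ∀ v ∈ coordSub K 4 (dV134 i),
        ((↑g : Matrix (Fin 4) (Fin 4) K) - 1).mulVec v ∈ coordSub K 4 (dV134 (i - 1)) :=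
    Iff.rfl
  rw [hmem]
  set M : Matrix (Fin 4) (Fin 4) K := ↑g with hM
  constructor
  · intro h
    have h1 := h 1 (by norm_num) (by norm_num)
    have h2 := h 2 (by norm_num) (by norm_num)
    have h3 := h 3 (by norm_num) (by norm_num)
    have e1 : ∀ k : Fin 4, (M - 1) k 0 = 0 := by
      intro k
      have hs : Pi.single (0 : Fin 4) (1 : K) ∈ coordSub K 4 (dV134 1) :=
        single_mem_coordSub _ (by decide) 1
      have := mem_coordSub.mp (h1 _ hs) k (Nat.zero_le _)
      rw [Matrix.mulVec_single] at this
      simpa using this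
    have e2 : ∀ k : Fin 4, 1 ≤ (k : ℕ) → ∀ j : Fin 4, (j : ℕ) < 3 → (M - 1) k j = 0 := by
      intro k hk j hj
      have hs : Pi.single j (1 : K) ∈ coordSub K 4 (dV134 2) :=
        single_mem_coordSub _ hj 1
      have := mem_coordSub.mp (h2 _ hs) k hk
      rw [Matrix.mulVec_single] at this
      simpa using this
    have e3 : ∀ j : Fin 4, (M - 1) 3 j = 0 := by
      intro j
      have hs : Pi.single j (1 : K) ∈ coordSub K 4 (dV134 3) :=
        single_mem_coordSub _ j.isLt 1
      have := mem_coordSub.mp (h3 _ hs) 3 (by decide)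
      rw [Matrix.mulVec_single] at this
      simpa using this
    refine ⟨?_, ?_, ?_⟩
    · intro i j hij
      have hij' : (j : ℕ) < (i : ℕ) := hij
      have hz : (M - 1) i j = 0 := by
        rcases Nat.eq_zero_or_pos (j : ℕ) with hj0 | hj0
        · have : j = 0 := Fin.ext hj0
          subst this
          exact e1 i
        · have hi4 := i.isLt
          have hj3 : (j : ℕ) < 3 := by omega
          exact e2 i (by omega) j hj3
      rw [Matrix.sub_apply, Matrix.one_apply_ne hij.ne', sub_zero] at hz
      exact hz
    · intro i
      have hz : (M - 1) i i = 0 := by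
        fin_cases i
        · exact e1 0
        · exact e2 1 (by decide) 1 (by decide)
        · exact e2 2 (by decide) 2 (by decide)
        · exact e3 3
      rw [Matrix.sub_apply, Matrix.one_apply_eq] at hz
      exact sub_eq_zero.mp hz
    · have hz := e2 1 (by decide) 2 (by decide)
      rwa [Matrix.sub_apply, Matrix.one_apply_ne (by decide), sub_zero] at hz
  · rintro ⟨hl, hdg, h12⟩
    have key : ∀ k j : Fin 4,
        ((j : ℕ) = 0 ∨ ((j : ℕ) < 3 ∧ 1 ≤ (k : ℕ)) ∨ (k : ℕ) = 3) → (M - 1) k j = 0 := by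
      intro k j hc
      rw [Matrix.sub_apply]
      rcases eq_or_ne k j with rfl | hkj
      · rw [Matrix.one_apply_eq, hdg, sub_self]
      · rw [Matrix.one_apply_ne hkj, sub_zero]
        rcases Nat.lt_or_ge (j : ℕ) (k : ℕ) with hlt | hge
        · exact hl k j hlt
        · have hk4 := k.isLt
          have hj4 := j.isLt
          have hkj' : (k : ℕ) ≠ (j : ℕ) := fun hh => hkj (Fin.ext hh)
          have hk1 : (k : ℕ) = 1 ∧ (j : ℕ) = 2 := by omega
          have hkk : k = 1 := Fin.ext (by rw [hk1.1]; rfl)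
          have hjj : j = 2 := Fin.ext (by rw [hk1.2]; rfl)
          rw [hkk, hjj]
          exact h12
    intro i h1i hi3 v hv
    have hv' := mem_coordSub.mp hv
    interval_cases i
    · rw [mem_coordSub]
      intro k hk
      show ((M - 1).mulVec v) k = 0
      simp only [Matrix.mulVec, dotProduct, Fin.sum_univ_four]
      rw [key k 0 (Or.inl rfl), hv' 1 (by decide), hv' 2 (by decide), hv' 3 (by decide)]
      ring
    · rw [mem_coordSub]
      intro k hk
      have hk1 : 1 ≤ (k : ℕ) := hk
      show ((M - 1).mulVec v) k = 0
      simp only [Matrix.mulVec, dotProduct, Fin.sum_univ_four]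
      rw [key k 0 (Or.inl rfl), key k 1 (Or.inr (Or.inl ⟨by decide, hk1⟩)),
        key k 2 (Or.inr (Or.inl ⟨by decide, hk1⟩)), hv' 3 (by decide)]
      ring
    · rw [mem_coordSub]
      intro k hk
      have hk3 : (k : ℕ) = 3 := by
        have := k.isLt
        have hk' : 3 ≤ (k : ℕ) := hk
        omega
      show ((M - 1).mulVec v) k = 0
      simp only [Matrix.mulVec, dotProduct, Fin.sum_univ_four]
      rw [key k 0 (Or.inl rfl), key k 1 (Or.inr (Or.inr hk3)),
        key k 2 (Or.inr (Or.inr hk3)), key k 3 (Or.inr (Or.inr hk3))]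
      ring

end MatrixSide

section MatGroup

variable {K : Type u} [Field K]

/-- The generic element of the unipotent radical. -/
def mk5 (a b d e c : K) : Matrix (Fin 4) (Fin 4) K :=
  !![1, a, b, c; 0, 1, 0, d; 0, 0, 1, e; 0, 0, 0, 1]

lemma mk5_mul (a b d e c a' b' d' e' c' : K) :
    mk5 a b d e c * mk5 a' b' d' e' c'
      = mk5 (a + a') (b + b') (d + d') (e + e') (c + c' + a * d' + b * e') := by
  ext i j
  fin_cases i <;> fin_cases j <;>
    simp [mk5, Matrix.mul_apply, Fin.sum_univ_four, Matrix.vecHead, Matrix.vecTail] <;> ring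

lemma mk5_one : mk5 (0 : K) 0 0 0 0 = 1 := by
  ext i j
  fin_cases i <;> fin_cases j <;>
    simp [mk5, Matrix.one_apply, Matrix.vecHead, Matrix.vecTail]

/-- The generic element of the unipotent radical, as an invertible matrix. -/
def gU (a b d e c : K) : GL (Fin 4) K where
  val := mk5 a b d e c
  inv := mk5 (-a) (-b) (-d) (-e) (a * d + b * e - c)
  val_inv := by
    rw [mk5_mul, ← mk5_one]
    congr 1 <;> ring
  inv_val := by
    rw [mk5_mul, ← mk5_one]
    congr 1 <;> ring

lemma gU_mem (a b d e c : K) : gU a b d e c ∈ flagU K 4 3 dV134 dV134_zero dV134_mono := by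
  rw [mem_flagU_iff]
  refine ⟨?_, ?_, ?_⟩
  · intro i j hij
    fin_cases i <;> fin_cases j <;>
      first
        | exact absurd hij (by decide)
        | simp [gU, mk5, Matrix.vecHead, Matrix.vecTail]
  · intro i
    fin_cases i <;> simp [gU, mk5, Matrix.vecHead, Matrix.vecTail]
  · simp [gU, mk5, Matrix.vecHead, Matrix.vecTail]

lemma eq_mk5 {g : GL (Fin 4) K} (h : g ∈ flagU K 4 3 dV134 dV134_zero dV134_mono) :
    (↑g : Matrix (Fin 4) (Fin 4) K)
      = mk5 ((↑g : Matrix (Fin 4) (Fin 4) K) 0 1) ((↑g : Matrix (Fin 4) (Fin 4) K) 0 2)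
          ((↑g : Matrix (Fin 4) (Fin 4) K) 1 3) ((↑g : Matrix (Fin 4) (Fin 4) K) 2 3)
          ((↑g : Matrix (Fin 4) (Fin 4) K) 0 3) := by
  obtain ⟨hl, hd, h12⟩ := (mem_flagU_iff g).mp h
  ext i j
  fin_cases i <;> fin_cases j <;>
    simp [mk5, Matrix.vecHead, Matrix.vecTail] <;>
    first
      | exact hd _
      | exact hl _ _ (by decide)
      | exact h12

/-- The unipotent radical is isomorphic to the explicit model. -/
def heisEquiv : ↥(flagU K 4 3 dV134 dV134_zero dV134_mono) ≃* Heis K where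
  toFun g := ⟨((g : GL (Fin 4) K) : Matrix (Fin 4) (Fin 4) K) 0 1,
    ((g : GL (Fin 4) K) : Matrix (Fin 4) (Fin 4) K) 0 2,
    ((g : GL (Fin 4) K) : Matrix (Fin 4) (Fin 4) K) 1 3,
    ((g : GL (Fin 4) K) : Matrix (Fin 4) (Fin 4) K) 2 3,
    ((g : GL (Fin 4) K) : Matrix (Fin 4) (Fin 4) K) 0 3⟩
  invFun x := ⟨gU x.a x.b x.d x.e x.c, gU_mem x.a x.b x.d x.e x.c⟩
  left_inv g := by
    apply Subtype.ext
    apply Units.ext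
    exact (eq_mk5 g.2).symm
  right_inv x := by
    cases x
    simp only [Heis.mk.injEq]
    refine ⟨?_, ?_, ?_, ?_, ?_⟩ <;>
      simp [gU, mk5, Matrix.vecHead, Matrix.vecTail]
  map_mul' := by
    rintro ⟨g, hgm⟩ ⟨h, hhm⟩
    have hg := eq_mk5 hgm
    have hh := eq_mk5 hhm
    dsimp only
    rw [Heis.mul_def]
    have hgh : ((↑(g * h) : GL (Fin 4) K) : Matrix (Fin 4) (Fin 4) K)
        = ((g : GL (Fin 4) K) : Matrix (Fin 4) (Fin 4) K)
          * ((h : GL (Fin 4) K) : Matrix (Fin 4) (Fin 4) K) := rfl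
    simp only [Subgroup.coe_mul] at *
    rw [hgh, hg, hh, mk5_mul]
    simp only [Heis.mk.injEq]
    refine ⟨?_, ?_, ?_, ?_, ?_⟩ <;>
      simp [mk5, Matrix.vecHead, Matrix.vecTail]

end MatGroup

/-- The unipotent radical `V` of the stabilizer of the flag `0 ⊆ F_q^1 ⊆ F_q^3 ⊆ F_q^4`
consists of the upper unitriangular matrices with `(2,3)`-entry zero, and its number of
conjugacy classes is `(q-1)^4 + 4(q-1)^3 + 6(q-1)^2 + 5(q-1) + 1`. -/
theorem stmt12 (q : ℕ) (hq : ∃ p k : ℕ, p.Prime ∧ 1 ≤ k ∧ q = p ^ k)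
    (K : Type u) [Field K] [Fintype K] (hcard : Fintype.card K = q) :
    (∀ g : GL (Fin 4) K, g ∈ flagU K 4 3 dV134 dV134_zero dV134_mono ↔
      ((∀ i j : Fin 4, j < i → (↑g : Matrix (Fin 4) (Fin 4) K) i j = 0) ∧
       (∀ i : Fin 4, (↑g : Matrix (Fin 4) (Fin 4) K) i i = 1) ∧
       (↑g : Matrix (Fin 4) (Fin 4) K) 1 2 = 0)) ∧
    (Nat.card (ConjClasses ↥(flagU K 4 3 dV134 dV134_zero dV134_mono)) : ℤ)
      = ((q : ℤ) - 1) ^ 4 + 4 * ((q : ℤ) - 1) ^ 3 + 6 * ((q : ℤ) - 1) ^ 2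
        + 5 * ((q : ℤ) - 1) + 1 := by
  refine ⟨fun g => mem_flagU_iff g, ?_⟩
  have e := conjClassesCongr (heisEquiv (K := K))
  rw [Nat.card_congr e, card_conjClasses_heis, hcard]
  have hq1 : 1 ≤ q := hcard ▸ Fintype.card_pos
  have hq4 : 1 ≤ q ^ 4 := Nat.one_le_pow _ _ (by omega)
  have hcast : ((q ^ 4 + q - 1 : ℕ) : ℤ) = (q : ℤ) ^ 4 + (q : ℤ) - 1 := by
    push_cast [Nat.cast_sub (by omega : 1 ≤ q ^ 4 + q)]
    ring
  rw [hcast]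
  ring
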